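/- Let λ₁ ≠ λ₂ be complex numbers, let P(λ) = diag(λ−λ₁, λ−λ₂, 0) and let Q(λ) be the 3×3 symmetric pencil with Q(λ)_{13} = Q(λ)_{31} = λ, Q(λ)_{23} = Q(λ)_{32} = 1, and all other entries 0. Then for every ε > 0 there exist matrices A,B ∈ ℂ^{3×3} with ‖A‖ + ‖B‖ < ε such that the pencil P(λ) + λA + B is strictly equivalent to Q(λ). -/

import Mathlib

open Matrix

attribute [local instance] Matrix.normedAddCommGroup

/-- The coefficient of `λ` in `P(λ) = diag(λ-λ₁, λ-λ₂, 0)`. -/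
def P1 : Matrix (Fin 3) (Fin 3) ℂ := !![1, 0, 0; 0, 1, 0; 0, 0, 0]

/-- The constant coefficient of `P(λ) = diag(λ-λ₁, λ-λ₂, 0)`. -/
def P0 (l₁ l₂ : ℂ) : Matrix (Fin 3) (Fin 3) ℂ := !![-l₁, 0, 0; 0, -l₂, 0; 0, 0, 0]

/-- The coefficient of `λ` in `Q(λ)`. -/
def Q1 : Matrix (Fin 3) (Fin 3) ℂ := !![0, 0, 1; 0, 0, 0; 1, 0, 0]

/-- The constant coefficient of `Q(λ)`. -/
def Q0 : Matrix (Fin 3) (Fin 3) ℂ := !![0, 0, 0; 0, 0, 1; 0, 1, 0]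

/-- For `λ₁ ≠ λ₂`, and every `ε > 0`, there is a perturbation `λA + B` with
`‖A‖ + ‖B‖ < ε` such that the pencil `P(λ) + λA + B` is strictly equivalent to `Q(λ)`. -/
theorem stmt4 (l₁ l₂ : ℂ) (h : l₁ ≠ l₂) :
    ∀ ε : ℝ, 0 < ε → ∃ A B : Matrix (Fin 3) (Fin 3) ℂ, ‖A‖ + ‖B‖ < ε ∧
      ∃ U V : Matrix (Fin 3) (Fin 3) ℂ, IsUnit U.det ∧ IsUnit V.det ∧
        U * (P1 + A) * V = Q1 ∧ U * (P0 l₁ l₂ + B) * V = Q0 := by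
  intro ε hε
  set d : ℂ := ((ε / 2 : ℝ) : ℂ) with hd
  have hd0 : d ≠ 0 := by
    simp [hd, Complex.ofReal_eq_zero]
    linarith
  refine ⟨0, !![0, 0, d; 0, 0, 0; 0, d, 0], ?_, ?_⟩
  · have hB : ‖(!![0, 0, d; 0, 0, 0; 0, d, 0] : Matrix (Fin 3) (Fin 3) ℂ)‖ ≤ ε / 2 := by
      rw [Matrix.norm_le_iff (by linarith)]
      intro i j
      fin_cases i <;> fin_cases j <;>
        simp [hd, Matrix.vecHead, Matrix.vecTail, abs_of_pos hε] <;> linarith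
    rw [norm_zero]
    linarith
  · refine ⟨!![0, d, l₂; 0, 0, 1; 1, 0, 0], !![1, 0, 0; 0, 0, 1/d; l₁/d, 1/d, 0],
      ?_, ?_, ?_, ?_⟩
    · rw [Matrix.det_fin_three]
      simp [isUnit_iff_ne_zero, hd0]
    · rw [Matrix.det_fin_three]
      simp [isUnit_iff_ne_zero, hd0]
    · ext i j
      rw [P1, Q1, add_zero]
      fin_cases i <;> fin_cases j <;>
        simp [Matrix.mul_apply, Fin.sum_univ_three, Matrix.vecHead, Matrix.vecTail] <;>
        field_simp
    · ext i j
      rw [P0, Q0]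
      fin_cases i <;> fin_cases j <;>
        simp [Matrix.mul_apply, Fin.sum_univ_three, Matrix.vecHead, Matrix.vecTail] <;>
        (try field_simp) <;> (try ring) <;> tauto
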